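/- Let X be a Hilbert space, f: X → ℝ convex and continuous, and suppose x̄ ∈ X with f(x̄) > 0 and ∂f bounded near x̄. Consider any sequence {x_i} such that x_{i+1} lies in the intersection F_i of halfspaces including the halfspace H_i = {x : f(x_i) + ⟨y_i, x - x_i⟩ ≤ 0} with y_i ∈ ∂f(x_i), F_{i+1} ⊆ F_i for all i, and x_j ∈ F_i for all j > i. Then x̄ cannot be a strong cluster point of {x_i}. -/

import Mathlib

open RealInnerProductSpace Filter

/-- The convex subdifferential of `f : X → ℝ` at `x`. -/
def subdiff {X : Type*} [NormedAddCommGroup X] [InnerProductSpace ℝ X]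
    (f : X → ℝ) (x : X) : Set X :=
  {y | ∀ z, f x + ⟪y, z - x⟫ ≤ f z}

/-- In the infeasible case, a point with `f(x̄) > 0` cannot be a strong cluster
point of iterates confined to nested subgradient-cut polyhedra. -/
theorem no_strong_cluster_point_CIP
    {X : Type*} [NormedAddCommGroup X] [InnerProductSpace ℝ X] [CompleteSpace X]
    (f : X → ℝ) (hconv : ConvexOn ℝ Set.univ f) (hcont : Continuous f)
    (xbar : X) (hfxbar : 0 < f xbar)
    (hbdd : ∃ r > (0:ℝ), ∃ M : ℝ, ∀ z ∈ Metric.ball xbar r, ∀ y ∈ subdiff f z, ‖y‖ ≤ M)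
    (x y : ℕ → X) (hy : ∀ i, y i ∈ subdiff f (x i))
    (F : ℕ → Set X)
    (hFH : ∀ i, F i ⊆ {z | f (x i) + ⟪y i, z - x i⟫ ≤ 0})
    (hFnest : ∀ i, F (i + 1) ⊆ F i)
    (hxF : ∀ i j, i < j → x j ∈ F i) :
    ¬ MapClusterPt xbar atTop x := by
  intro hcl
  obtain ⟨r, hr, M, hM⟩ := hbdd
  obtain ⟨δ, hδ0, hδ⟩ : ∃ δ > 0, ∀ z, dist z xbar < δ → f xbar / 2 ≤ f z := by
    obtain ⟨δ, hδ0, hδ⟩ := Metric.continuousAt_iff.mp hcont.continuousAt (f xbar / 2)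
      (by linarith)
    refine ⟨δ, hδ0, fun z hz => ?_⟩
    have h := hδ hz
    rw [Real.dist_eq] at h
    have := abs_lt.mp h
    linarith [this.1]
  set ε := min r δ with hε
  have hε0 : 0 < ε := lt_min hr hδ0
  have freq : ∀ s ∈ nhds xbar, ∃ᶠ i in atTop, x i ∈ s := mapClusterPt_iff_frequently.mp hcl
  have key : ∀ i, dist (x i) xbar < ε → ∀ j, i < j → f xbar / 2 ≤ M * ‖x j - x i‖ := by
    intro i hi j hij
    have hball : x i ∈ Metric.ball xbar r :=
      Metric.mem_ball.mpr (lt_of_lt_of_le hi (min_le_left _ _))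
    have hfi : f xbar / 2 ≤ f (x i) := hδ _ (lt_of_lt_of_le hi (min_le_right _ _))
    have hH := hFH i (hxF i j hij)
    simp only [Set.mem_setOf_eq] at hH
    have h1 : -⟪y i, x j - x i⟫ ≤ ‖y i‖ * ‖x j - x i‖ :=
      le_trans (neg_le_abs _) (abs_real_inner_le_norm _ _)
    have h2 : ‖y i‖ * ‖x j - x i‖ ≤ M * ‖x j - x i‖ :=
      mul_le_mul_of_nonneg_right (hM _ hball _ (hy i)) (norm_nonneg _)
    linarith
  -- M is positive
  have hMpos : 0 < M := by
    obtain ⟨i, hi⟩ := (freq _ (Metric.ball_mem_nhds xbar hε0)).exists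
    have h := key i (Metric.mem_ball.mp hi) (i + 1) (Nat.lt_succ_self i)
    by_contra hMle
    push_neg at hMle
    nlinarith [norm_nonneg (x (i + 1) - x i)]
  set c := f xbar / (2 * M) with hc
  have hc0 : 0 < c := by positivity
  have hmin : 0 < min ε (c / 2) := lt_min hε0 (by positivity)
  obtain ⟨i, hi⟩ := (freq _ (Metric.ball_mem_nhds xbar hmin)).exists
  rw [Metric.mem_ball] at hi
  obtain ⟨j, hji, hj⟩ :=
    ((freq _ (Metric.ball_mem_nhds xbar (by positivity : (0:ℝ) < c / 2))).and_eventually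
      (eventually_ge_atTop (i + 1))).exists
  rw [Metric.mem_ball] at hji
  have hij : i < j := Nat.lt_of_succ_le hj
  have h := key i (lt_of_lt_of_le hi (min_le_left _ _)) j hij
  have hd : ‖x j - x i‖ < c := by
    have := dist_triangle (x j) xbar (x i)
    have h2 : dist xbar (x i) < c / 2 :=
      lt_of_lt_of_le (by rw [dist_comm]; exact hi) (min_le_right _ _)
    rw [← dist_eq_norm]
    linarith
  have : M * ‖x j - x i‖ < M * c := mul_lt_mul_of_pos_left hd hMpos
  have hMc : M * c = f xbar / 2 := by
    field_simp [hc]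
    rw [hc]
    field_simp
  linarith
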